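/- Let G = (V, E) be a finite connected simple graph, w : E → ℝ an injective weight function, and T the minimal spanning tree of (G, w). Then for any vertices x, y ∈ V, the (unique) path in T from x to y and any path in G from x to y satisfy: the maximum of w over the edges of the T-path is less than or equal to the maximum of w over the edges of the G-path. -/

import Mathlib

/-- A spanning tree of a simple graph `G` on `V`: a graph on the same vertex set which is
a subgraph of `G` (i.e. `T ≤ G`), connected and acyclic. -/
def IsSpanningTree {V : Type*} (G T : SimpleGraph V) : Prop :=
  T ≤ G ∧ T.Connected ∧ T.IsAcyclic

/-- The total weight of (the edges of) a graph `T` with respect to a weight function `w`. -/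
noncomputable def treeWeight {V : Type*} [Finite V] (T : SimpleGraph V) (w : Sym2 V → ℝ) : ℝ :=
  ∑ e ∈ T.edgeSet.toFinite.toFinset, w e

open SimpleGraph

/-- Every vertex on a `T`-walk ends on one of the two sides of a deleted edge. -/
private lemma walk_two_sides {V : Type*} {T : SimpleGraph V} {a b : V} :
    ∀ {u v : V} (_ : T.Walk u v),
      (T.deleteEdges {s(a, b)}).Reachable u v ∨ (T.deleteEdges {s(a, b)}).Reachable u a ∨
        (T.deleteEdges {s(a, b)}).Reachable u b := by
  intro u v p
  induction p with
  | nil => exact Or.inl (Reachable.refl _)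
  | @cons u u' v h q ih =>
    by_cases he : s(u, u') = s(a, b)
    · rw [Sym2.eq_iff] at he
      rcases he with ⟨rfl, rfl⟩ | ⟨rfl, rfl⟩
      · exact Or.inr (Or.inl (Reachable.refl _))
      · exact Or.inr (Or.inr (Reachable.refl _))
    · have hadj : (T.deleteEdges {s(a, b)}).Adj u u' := by
        rw [deleteEdges_adj]
        exact ⟨h, by simpa using he⟩
      rcases ih with h1 | h1 | h1
      · exact Or.inl (hadj.reachable.trans h1)
      · exact Or.inr (Or.inl (hadj.reachable.trans h1))
      · exact Or.inr (Or.inr (hadj.reachable.trans h1))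

/-- A path through the edge `s(a,b)` splits into two halves avoiding that edge. -/
private lemma path_split {V : Type*} {T : SimpleGraph V} {a b : V} :
    ∀ {x y : V} (p : T.Walk x y), p.IsPath → s(a, b) ∈ p.edges →
      ((T.deleteEdges {s(a, b)}).Reachable x a ∧ (T.deleteEdges {s(a, b)}).Reachable b y) ∨
      ((T.deleteEdges {s(a, b)}).Reachable x b ∧ (T.deleteEdges {s(a, b)}).Reachable a y) := by
  intro x y p
  induction p with
  | nil => simp
  | @cons x u y h q ih =>
    intro hp he
    rw [Walk.edges_cons, List.mem_cons] at he
    have hnd := hp.edges_nodup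
    rw [Walk.edges_cons] at hnd
    rcases he with he | he
    · have hq : ∀ e' ∈ q.edges, e' ∉ ({s(a, b)} : Set (Sym2 V)) := by
        intro e' he' hmem
        rw [Set.mem_singleton_iff] at hmem
        subst hmem
        exact (List.nodup_cons.mp hnd).1 (he ▸ he')
      have hr : (T.deleteEdges {s(a, b)}).Reachable u y := ⟨q.toDeleteEdges _ hq⟩
      rw [Sym2.eq_iff] at he
      rcases he with ⟨rfl, rfl⟩ | ⟨rfl, rfl⟩
      · exact Or.inl ⟨Reachable.refl _, hr⟩
      · exact Or.inr ⟨Reachable.refl _, hr⟩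
    · have hne : s(x, u) ≠ s(a, b) := fun hcon =>
        (List.nodup_cons.mp hnd).1 (hcon ▸ he)
      have hadj : (T.deleteEdges {s(a, b)}).Adj x u := by
        rw [deleteEdges_adj]
        exact ⟨h, by simpa using hne⟩
      rcases ih hp.of_cons he with ⟨h1, h2⟩ | ⟨h1, h2⟩
      · exact Or.inl ⟨hadj.reachable.trans h1, h2⟩
      · exact Or.inr ⟨hadj.reachable.trans h1, h2⟩

/-- The exchange step: given a too-heavy tree edge separating `x` from `y` and a `G`-walk
from `x` to `y` all of whose edges are lighter, build a strictly better spanning tree. -/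
private lemma build_better {V : Type*} [Fintype V] (G : SimpleGraph V)
    (w : Sym2 V → ℝ) (T : SimpleGraph V) (hT : IsSpanningTree G T)
    {x y a b : V} (hadjT : T.Adj a b)
    (hxa : (T.deleteEdges {s(a, b)}).Reachable x a)
    (hby : (T.deleteEdges {s(a, b)}).Reachable b y)
    (hbridge : ¬ (T.deleteEdges {s(a, b)}).Reachable a b)
    (pG : G.Walk x y)
    (hcon : ∀ f ∈ pG.edges, w f < w s(a, b)) :
    ∃ T' : SimpleGraph V, IsSpanningTree G T' ∧ treeWeight T' w < treeWeight T w := by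
  classical
  set e := s(a, b) with hedef
  set D := T.deleteEdges {e} with hDdef
  have hDle : D ≤ T := deleteEdges_le _
  set S := {v | D.Reachable a v} with hSdef
  have hxS : x ∈ S := hxa.symm
  have hyS : y ∉ S := fun hmem => hbridge (hmem.trans hby.symm)
  obtain ⟨dd, hdart, hc, hd⟩ := pG.exists_boundary_dart S hxS hyS
  have hfG : G.Adj dd.fst dd.snd := dd.adj
  have hfe : s(dd.fst, dd.snd) ∈ pG.edges := by
    have : dd.edge ∈ pG.edges := List.mem_map_of_mem (f := SimpleGraph.Dart.edge) hdart
    simpa [Dart.edge] using this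
  set c := dd.fst
  set d := dd.snd
  have hflt : w s(c, d) < w e := hcon _ hfe
  have hfne : s(c, d) ≠ e := fun hcon' => absurd hflt (by rw [hcon']; exact lt_irrefl _)
  have hfnotT : s(c, d) ∉ T.edgeSet := by
    intro hmem
    have hDadj : D.Adj c d := by
      rw [hDdef, deleteEdges_adj]
      exact ⟨hmem, by simpa using hfne⟩
    exact hd (hc.trans hDadj.reachable)
  set E' := insert (s(c, d)) (T.edgeSet \ {e}) with hE'def
  set T' := SimpleGraph.fromEdgeSet E' with hT'def
  have hT'edge : T'.edgeSet = E' := by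
    rw [hT'def, edgeSet_fromEdgeSet, sdiff_eq_left]
    rw [Set.disjoint_left]
    rintro z (rfl | ⟨hz, -⟩)
    · exact fun hdiag => hfG.ne (Sym2.mk_isDiag_iff.mp hdiag)
    · exact fun hdiag => (SimpleGraph.not_isDiag_of_mem_edgeSet T hz) hdiag
  have hDT' : D ≤ T' := by
    rw [← edgeSet_subset_edgeSet, hT'edge]
    rw [hDdef, edgeSet_deleteEdges]
    exact Set.subset_insert _ _
  have hT'G : T' ≤ G := by
    rw [← edgeSet_subset_edgeSet, hT'edge]
    rintro z (rfl | ⟨hz, -⟩)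
    · exact hfG
    · exact edgeSet_mono hT.1 hz
  have hadjT' : T'.Adj c d := by
    rw [← SimpleGraph.mem_edgeSet, hT'edge]
    exact Set.mem_insert _ _
  have hside : ∀ v, D.Reachable v a ∨ D.Reachable v b := by
    intro v
    rcases walk_two_sides (a := a) (b := b) ((hT.2.1.preconnected v a).some) with h1 | h1 | h1
    · exact Or.inl h1
    · exact Or.inl h1
    · exact Or.inr h1
  have hba : T'.Reachable b a := by
    have h1 : D.Reachable d b := (hside d).resolve_left (fun h => hd h.symm)
    exact ((h1.symm.mono hDT').trans (hadjT'.symm.reachable)).trans (hc.symm.mono hDT')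
  have hreachA : ∀ v, T'.Reachable v a := by
    intro v
    rcases hside v with h1 | h1
    · exact h1.mono hDT'
    · exact (h1.mono hDT').trans hba
  have hconn : T'.Connected := by
    rw [connected_iff]
    exact ⟨fun u v => (hreachA u).trans (hreachA v).symm, hT.2.1.nonempty⟩
  have hfbridge : T'.IsBridge s(c, d) := by
    rw [isBridge_iff]
    refine fun hreach => ?_
    have hle : (T' \ SimpleGraph.fromEdgeSet {s(c, d)}) ≤ D := by
      rw [← edgeSet_subset_edgeSet]
      have : (T' \ SimpleGraph.fromEdgeSet {s(c, d)}) = T'.deleteEdges {s(c, d)} := rfl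
      rw [this, edgeSet_deleteEdges, hT'edge, hDdef, edgeSet_deleteEdges]
      intro z hz
      rcases hz.1 with rfl | hz'
      · exact absurd rfl hz.2
      · exact hz'
    exact hd (hc.trans (hreach.mono hle))
  have hacyc : T'.IsAcyclic := by
    intro v cyc hcyc
    by_cases hf : s(c, d) ∈ cyc.edges
    · exact (((isBridge_iff_mem_and_forall_cycle_notMem hadjT').mp hfbridge) cyc hcyc) hf
    · have hsub : ∀ e' ∈ cyc.edges, e' ∈ T.edgeSet := by
        intro e' he'
        have hmem : e' ∈ T'.edgeSet := cyc.edges_subset_edgeSet he'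
        rw [hT'edge] at hmem
        rcases hmem with rfl | hmem'
        · exact absurd he' hf
        · exact hmem'.1
      exact hT.2.2 (cyc.transfer T hsub) (hcyc.transfer hsub)
  refine ⟨T', ⟨hT'G, hconn, hacyc⟩, ?_⟩
  have heT : e ∈ T.edgeSet := hadjT
  set s0 := (T.edgeSet \ {e}).toFinite.toFinset with hs0
  have h1 : T'.edgeSet.toFinite.toFinset = insert (s(c, d)) s0 := by
    ext z
    simp only [Set.Finite.mem_toFinset, hT'edge, hE'def, Set.mem_insert_iff, Finset.mem_insert,
      hs0, Set.mem_diff, Set.mem_singleton_iff]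
  have h2 : T.edgeSet.toFinite.toFinset = insert e s0 := by
    ext z
    simp only [Set.Finite.mem_toFinset, Finset.mem_insert, hs0, Set.mem_diff,
      Set.mem_singleton_iff]
    constructor
    · intro hz
      by_cases hze : z = e
      · exact Or.inl hze
      · exact Or.inr ⟨hz, hze⟩
    · rintro (rfl | ⟨hz, -⟩)
      · exact heT
      · exact hz
  have hf0 : s(c, d) ∉ s0 := by
    rw [hs0, Set.Finite.mem_toFinset]
    rintro ⟨hmem, -⟩
    exact hfnotT hmem
  have he0 : e ∉ s0 := by
    rw [hs0, Set.Finite.mem_toFinset]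
    rintro ⟨-, hmem⟩
    exact hmem rfl
  rw [treeWeight, treeWeight, h1, h2, Finset.sum_insert hf0, Finset.sum_insert he0]
  linarith

/-- Minimax paths property of the MST: for any two vertices `x, y`, the maximum edge weight
along the (unique) path in the MST `T` from `x` to `y` is at most the maximum edge weight
along any path in `G` from `x` to `y`. -/
theorem mst_minimax {V : Type*} [Fintype V]
    (G : SimpleGraph V) (hG : G.Connected)
    (w : Sym2 V → ℝ) (hw : Set.InjOn w G.edgeSet)
    (T : SimpleGraph V) (hT : IsSpanningTree G T)
    (hmin : ∀ T' : SimpleGraph V, IsSpanningTree G T' →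
      treeWeight T w ≤ treeWeight T' w)
    (x y : V) (pT : T.Walk x y) (hpT : pT.IsPath)
    (pG : G.Walk x y) (hpG : pG.IsPath) :
    (pT.edges.map w).maximum ≤ (pG.edges.map w).maximum := by
  classical
  have key : ∀ e ∈ pT.edges, ∃ f ∈ pG.edges, w e ≤ w f := by
    intro e he
    by_contra hcon
    push_neg at hcon
    revert he hcon
    induction e using Sym2.ind with
    | _ a b =>
      intro he hcon
      have hadjT : T.Adj a b := pT.edges_subset_edgeSet he
      have hbridge : ¬ (T.deleteEdges {s(a, b)}).Reachable a b := by
        have hb := (isAcyclic_iff_forall_adj_isBridge.mp hT.2.2) hadjT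
        rw [isBridge_iff] at hb
        exact hb
      obtain ⟨T', hT', hlt⟩ :
          ∃ T' : SimpleGraph V, IsSpanningTree G T' ∧ treeWeight T' w < treeWeight T w := by
        rcases path_split pT hpT he with ⟨hxa, hby⟩ | ⟨hxb, hay⟩
        · exact build_better G w T hT hadjT hxa hby hbridge pG hcon
        · have hswap : s(b, a) = s(a, b) := Sym2.eq_swap
          refine build_better G w T hT hadjT.symm (by rw [hswap]; exact hxb)
            (by rw [hswap]; exact hay) (by rw [hswap]; exact fun h => hbridge h.symm) pG ?_
          rw [hswap]; exact hcon
      exact absurd (hmin T' hT') (not_le.mpr hlt)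
  apply List.maximum_le_of_forall_le
  intro m hm
  rw [List.mem_map] at hm
  obtain ⟨e, he, rfl⟩ := hm
  obtain ⟨f, hf, hwf⟩ := key e he
  exact le_trans (by exact_mod_cast hwf) (List.le_maximum_of_mem' (List.mem_map_of_mem (f := w) hf))
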